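/- Let K be a kernel in L²(X×X, μ×μ) such that the associated integral operator 𝒦 on L²(X,μ), defined by 𝒦(f)(x) = ∫ K(x,y) f(y) dμ(y), satisfies ⟨𝒦(f), f⟩ ≥ 0 for all f ∈ L²(X,μ). Then K is hermitian μ×μ-almost everywhere, i.e., K(x,y) = conj(K(y,x)) for μ×μ-a.e. (x,y). -/

import Mathlib

open MeasureTheory Complex Set ENNReal

private lemma integrable_conj_of {α : Type*} [MeasurableSpace α] {ν : MeasureTheory.Measure α}
    {f : α → ℂ} (hf : Integrable f ν) :
    Integrable (fun x => (starRingEnd ℂ) (f x)) ν :=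
  hf.norm.mono' (RCLike.continuous_conj.comp_aestronglyMeasurable hf.aestronglyMeasurable)
    (Filter.Eventually.of_forall fun x => by rw [RCLike.norm_conj])

private lemma Gint {X : Type*} [MeasurableSpace X] (μ : MeasureTheory.Measure X) [SigmaFinite μ]
    {K : X × X → ℂ} (hK : MemLp K 2 (μ.prod μ))
    {A B : Set X} (hA : MeasurableSet A) (hB : MeasurableSet B) (hAf : μ A < ∞) (hBf : μ B < ∞) :
    IntegrableOn (fun x => ∫ y in B, K (x, y) ∂μ) A μ ∧
      ∫ x in A, ∫ y in B, K (x, y) ∂μ ∂μ = ∫ p in A ×ˢ B, K p ∂(μ.prod μ) := by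
  haveI : IsFiniteMeasure ((μ.prod μ).restrict (A ×ˢ B)) := by
    constructor
    rw [Measure.restrict_apply_univ, Measure.prod_prod]
    exact ENNReal.mul_lt_top hAf hBf
  have hKi : Integrable K ((μ.restrict A).prod (μ.restrict B)) := by
    rw [Measure.prod_restrict]
    exact (hK.restrict _).integrable one_le_two
  refine ⟨hKi.integral_prod_left, ?_⟩
  rw [← Measure.prod_restrict]
  exact (integral_prod K hKi).symm

private lemma Psymm {X : Type*} [MeasurableSpace X] (μ : MeasureTheory.Measure X) [SigmaFinite μ]
    {K : X × X → ℂ} (hK : MemLp K 2 (μ.prod μ))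
    (hpos : ∀ f : X → ℂ, MemLp f 2 μ →
      (∫ x, (∫ y, K (x, y) * f y ∂μ) * (starRingEnd ℂ) (f x) ∂μ).im = 0)
    {A B : Set X} (hA : MeasurableSet A) (hB : MeasurableSet B) (hAf : μ A < ∞) (hBf : μ B < ∞) :
    ∫ p in B ×ˢ A, K p ∂(μ.prod μ) = (starRingEnd ℂ) (∫ p in A ×ˢ B, K p ∂(μ.prod μ)) := by
  have hsec : ∀ᵐ x ∂μ, MemLp (fun y => K (x, y)) 2 μ := by
    have h1 : Integrable (fun p => ‖K p‖ ^ 2) (μ.prod μ) :=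
      (memLp_two_iff_integrable_sq_norm hK.aestronglyMeasurable).mp hK
    filter_upwards [h1.prod_right_ae, hK.aestronglyMeasurable.prodMk_left] with x h2 h3
    exact (memLp_two_iff_integrable_sq_norm h3).mpr h2
  haveI hfA : IsFiniteMeasure (μ.restrict A) := ⟨by rwa [Measure.restrict_apply_univ]⟩
  haveI hfB : IsFiniteMeasure (μ.restrict B) := ⟨by rwa [Measure.restrict_apply_univ]⟩
  have hGAA : IntegrableOn (fun x => ∫ y in A, K (x, y) ∂μ) A μ := (Gint μ hK hA hA hAf hAf).1
  have hGBA : IntegrableOn (fun x => ∫ y in B, K (x, y) ∂μ) A μ := (Gint μ hK hA hB hAf hBf).1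
  have hGAB : IntegrableOn (fun x => ∫ y in A, K (x, y) ∂μ) B μ := (Gint μ hK hB hA hBf hAf).1
  have hGBB : IntegrableOn (fun x => ∫ y in B, K (x, y) ∂μ) B μ := (Gint μ hK hB hB hBf hBf).1
  have hQ : ∀ a b : ℂ,
      (∫ x, (∫ y, K (x, y) * (a * A.indicator (fun _ => (1:ℂ)) y
          + b * B.indicator (fun _ => (1:ℂ)) y) ∂μ) *
        (starRingEnd ℂ) (a * A.indicator (fun _ => (1:ℂ)) x
          + b * B.indicator (fun _ => (1:ℂ)) x) ∂μ) =
      (starRingEnd ℂ) a * a * ∫ x in A, (∫ y in A, K (x, y) ∂μ) ∂μ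
        + (starRingEnd ℂ) a * b * ∫ x in A, (∫ y in B, K (x, y) ∂μ) ∂μ
        + ((starRingEnd ℂ) b * a * ∫ x in B, (∫ y in A, K (x, y) ∂μ) ∂μ
          + (starRingEnd ℂ) b * b * ∫ x in B, (∫ y in B, K (x, y) ∂μ) ∂μ) := by
    intro a b
    have hinner : ∀ᵐ x ∂μ,
        (∫ y, K (x, y) * (a * A.indicator (fun _ => (1:ℂ)) y
          + b * B.indicator (fun _ => (1:ℂ)) y) ∂μ)
          = a * (∫ y in A, K (x, y) ∂μ) + b * (∫ y in B, K (x, y) ∂μ) := by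
      filter_upwards [hsec] with x hx
      have hxA : Integrable (A.indicator fun y => K (x, y)) μ :=
        IntegrableOn.integrable_indicator ((hx.restrict A).integrable one_le_two) hA
      have hxB : Integrable (B.indicator fun y => K (x, y)) μ :=
        IntegrableOn.integrable_indicator ((hx.restrict B).integrable one_le_two) hB
      have e1 : (fun y => K (x, y) * (a * A.indicator (fun _ => (1:ℂ)) y
            + b * B.indicator (fun _ => (1:ℂ)) y)) =
          fun y => a * A.indicator (fun y => K (x, y)) y
            + b * B.indicator (fun y => K (x, y)) y := by
        funext y
        by_cases hyA : y ∈ A <;> by_cases hyB : y ∈ B <;>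
          simp only [Set.indicator_of_mem, Set.indicator_of_notMem, hyA, hyB, if_true, if_false,
            mul_one, mul_zero, add_zero, zero_add, not_false_iff] <;> ring
      rw [e1, integral_add (hxA.const_mul a) (hxB.const_mul b), integral_const_mul,
        integral_const_mul, integral_indicator hA, integral_indicator hB]
    rw [integral_congr_ae (hinner.mono fun x hx => by rw [hx])]
    have e2 : (fun x => (a * (∫ y in A, K (x, y) ∂μ) + b * (∫ y in B, K (x, y) ∂μ)) *
          (starRingEnd ℂ) (a * A.indicator (fun _ => (1:ℂ)) x
            + b * B.indicator (fun _ => (1:ℂ)) x)) =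
        fun x => A.indicator (fun x => (starRingEnd ℂ) a *
            (a * (∫ y in A, K (x, y) ∂μ) + b * (∫ y in B, K (x, y) ∂μ))) x
          + B.indicator (fun x => (starRingEnd ℂ) b *
            (a * (∫ y in A, K (x, y) ∂μ) + b * (∫ y in B, K (x, y) ∂μ))) x := by
      funext x
      by_cases hxA : x ∈ A <;> by_cases hxB : x ∈ B <;>
        simp only [Set.indicator_of_mem, Set.indicator_of_notMem, hxA, hxB, not_false_iff,
          mul_one, mul_zero, add_zero, zero_add, map_add, map_mul, map_zero] <;> ring
    have hiA : Integrable (A.indicator fun x => (starRingEnd ℂ) a *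
        (a * (∫ y in A, K (x, y) ∂μ) + b * (∫ y in B, K (x, y) ∂μ))) μ :=
      IntegrableOn.integrable_indicator
        (((hGAA.const_mul a).add (hGBA.const_mul b)).const_mul ((starRingEnd ℂ) a)) hA
    have hiB : Integrable (B.indicator fun x => (starRingEnd ℂ) b *
        (a * (∫ y in A, K (x, y) ∂μ) + b * (∫ y in B, K (x, y) ∂μ))) μ :=
      IntegrableOn.integrable_indicator
        (((hGAB.const_mul a).add (hGBB.const_mul b)).const_mul ((starRingEnd ℂ) b)) hB
    rw [e2, integral_add hiA hiB, integral_indicator hA, integral_indicator hB,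
      integral_const_mul, integral_const_mul,
      integral_add (hGAA.const_mul a) (hGBA.const_mul b),
      integral_add (hGAB.const_mul a) (hGBB.const_mul b),
      integral_const_mul, integral_const_mul, integral_const_mul, integral_const_mul]
    ring
  have him : ∀ a b : ℂ,
      ((starRingEnd ℂ) a * a * ∫ x in A, (∫ y in A, K (x, y) ∂μ) ∂μ
        + (starRingEnd ℂ) a * b * ∫ x in A, (∫ y in B, K (x, y) ∂μ) ∂μ
        + ((starRingEnd ℂ) b * a * ∫ x in B, (∫ y in A, K (x, y) ∂μ) ∂μ
          + (starRingEnd ℂ) b * b * ∫ x in B, (∫ y in B, K (x, y) ∂μ) ∂μ)).im = 0 := by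
    intro a b
    have hf : MemLp (fun x => a * A.indicator (fun _ => (1:ℂ)) x
        + b * B.indicator (fun _ => (1:ℂ)) x) 2 μ :=
      ((memLp_indicator_const 2 hA (1:ℂ) (Or.inr hAf.ne)).const_mul a).add
        ((memLp_indicator_const 2 hB (1:ℂ) (Or.inr hBf.ne)).const_mul b)
    have h' : (∫ x, (∫ y, K (x, y) * (a * A.indicator (fun _ => (1:ℂ)) y
          + b * B.indicator (fun _ => (1:ℂ)) y) ∂μ) *
        (starRingEnd ℂ) (a * A.indicator (fun _ => (1:ℂ)) x
          + b * B.indicator (fun _ => (1:ℂ)) x) ∂μ).im = 0 := hpos _ hf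
    rw [hQ a b] at h'
    exact h'
  have e10 := him 1 0
  have e01 := him 0 1
  have e11 := him 1 1
  have eI := him 1 Complex.I
  rw [(Gint μ hK hB hA hBf hAf).2] at him e10 e01 e11 eI
  rw [(Gint μ hK hA hB hAf hBf).2] at him e10 e01 e11 eI
  simp only [map_one, map_zero, Complex.conj_I, one_mul, mul_one, zero_mul, mul_zero, add_zero,
    zero_add, neg_mul, Complex.I_mul_I, neg_neg, Complex.add_im, Complex.neg_im, Complex.mul_im,
    Complex.I_re, Complex.I_im, Complex.one_re, Complex.one_im] at e10 e01 e11 eI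
  apply Complex.ext
  · simp only [Complex.conj_re]
    linarith
  · simp only [Complex.conj_im]
    linarith

/-- If `K ∈ L²(X×X, μ×μ)` and the integral operator `𝒦` on `L²(X,μ)` generated by `K`
satisfies `⟨𝒦 f, f⟩ ≥ 0` for every `f ∈ L²(X,μ)`, then `K` is hermitian `μ×μ`-a.e.,
i.e. `K(x,y) = conj (K(y,x))` for `μ×μ`-a.e. `(x,y)`. -/
theorem positive_integral_operator_kernel_hermitian_ae
    {X : Type*} [MeasurableSpace X] (μ : Measure X) [SigmaFinite μ]
    (K : X × X → ℂ) (hK : MemLp K 2 (μ.prod μ))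
    (hpos : ∀ f : X → ℂ, MemLp f 2 μ →
      0 ≤ (∫ x, (∫ y, K (x, y) * f y ∂μ) * (starRingEnd ℂ) (f x) ∂μ).re ∧
      (∫ x, (∫ y, K (x, y) * f y ∂μ) * (starRingEnd ℂ) (f x) ∂μ).im = 0) :
    ∀ᵐ p ∂(μ.prod μ), K p = (starRingEnd ℂ) (K (p.2, p.1)) := by
  have hpos' : ∀ f : X → ℂ, MemLp f 2 μ →
      (∫ x, (∫ y, K (x, y) * f y ∂μ) * (starRingEnd ℂ) (f x) ∂μ).im = 0 :=
    fun f hf => (hpos f hf).2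
  have hswap : MemLp (fun p : X × X => K (p.2, p.1)) 2 (μ.prod μ) := by
    have hmap : Measure.map Prod.swap (μ.prod μ) = μ.prod μ := Measure.prod_swap
    have hmeas : AEStronglyMeasurable K (Measure.map Prod.swap (μ.prod μ)) := by
      rw [hmap]; exact hK.aestronglyMeasurable
    exact (memLp_map_measure_iff hmeas measurable_swap.aemeasurable).mp (by rwa [hmap])
  have hMint : ∀ S : Set (X × X), MeasurableSet S → (μ.prod μ) S < ∞ →
      IntegrableOn (fun p : X × X => K p - (starRingEnd ℂ) (K (p.2, p.1))) S (μ.prod μ) := by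
    intro S hS hSf
    haveI : IsFiniteMeasure ((μ.prod μ).restrict S) := ⟨by rwa [Measure.restrict_apply_univ]⟩
    exact ((hK.restrict S).integrable one_le_two).sub
      (integrable_conj_of ((hswap.restrict S).integrable one_le_two))
  have hrect : ∀ A B : Set X, MeasurableSet A → MeasurableSet B → μ A < ∞ → μ B < ∞ →
      ∫ p in A ×ˢ B, (K p - (starRingEnd ℂ) (K (p.2, p.1))) ∂(μ.prod μ) = 0 := by
    intro A B hA hB hAf hBf
    haveI : IsFiniteMeasure ((μ.prod μ).restrict (A ×ˢ B)) := by
      constructor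
      rw [Measure.restrict_apply_univ, Measure.prod_prod]
      exact ENNReal.mul_lt_top hAf hBf
    have h1 : IntegrableOn K (A ×ˢ B) (μ.prod μ) := (hK.restrict _).integrable one_le_two
    have h2 : IntegrableOn (fun p : X × X => K (p.2, p.1)) (A ×ˢ B) (μ.prod μ) :=
      (hswap.restrict _).integrable one_le_two
    rw [integral_sub h1 (integrable_conj_of h2)]
    have e1 : ∫ p in A ×ˢ B, (starRingEnd ℂ) (K (p.2, p.1)) ∂(μ.prod μ)
        = (starRingEnd ℂ) (∫ p in A ×ˢ B, K (p.2, p.1) ∂(μ.prod μ)) := integral_conj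
    have e2 : ∫ p in A ×ˢ B, K (p.2, p.1) ∂(μ.prod μ) = ∫ p in B ×ˢ A, K p ∂(μ.prod μ) := by
      rw [show A ×ˢ B = Prod.swap ⁻¹' (B ×ˢ A) from (Set.preimage_swap_prod B A).symm]
      exact (Measure.measurePreserving_swap (μ := μ) (ν := μ)).setIntegral_preimage_emb
        MeasurableEquiv.prodComm.measurableEmbedding K (B ×ˢ A)
    rw [e1, e2, Psymm μ hK hpos' hA hB hAf hBf, Complex.conj_conj, sub_self]
  have hclaim : ∀ n : ℕ, ∀ S : Set (X × X), MeasurableSet S →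
      ∫ p in S, (K p - (starRingEnd ℂ) (K (p.2, p.1)))
        ∂((μ.prod μ).restrict ((spanningSets μ n) ×ˢ (spanningSets μ n))) = 0 := by
    intro n
    have hA : MeasurableSet (spanningSets μ n) := measurableSet_spanningSets μ n
    have hAf : μ (spanningSets μ n) < ∞ := measure_spanningSets_lt_top μ n
    have hMi : Integrable (fun p : X × X => K p - (starRingEnd ℂ) (K (p.2, p.1)))
        ((μ.prod μ).restrict ((spanningSets μ n) ×ˢ (spanningSets μ n))) :=
      hMint _ (hA.prod hA) (by rw [Measure.prod_prod]; exact ENNReal.mul_lt_top hAf hAf)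
    have htot : ∫ p in (spanningSets μ n) ×ˢ (spanningSets μ n),
        (K p - (starRingEnd ℂ) (K (p.2, p.1))) ∂(μ.prod μ) = 0 :=
      hrect _ _ hA hA hAf hAf
    refine MeasurableSpace.induction_on_inter generateFrom_prod.symm isPiSystem_prod ?_ ?_ ?_ ?_
    · simp
    · rintro _ ⟨s, hs, t, ht, rfl⟩
      rw [Measure.restrict_restrict (hs.prod ht), Set.prod_inter_prod]
      exact hrect _ _ (hs.inter hA) (ht.inter hA)
        ((measure_mono Set.inter_subset_right).trans_lt hAf)
        ((measure_mono Set.inter_subset_right).trans_lt hAf)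
    · intro t ht hC
      have hadd := integral_add_compl ht hMi
      rw [hC, zero_add] at hadd
      rw [hadd]
      exact htot
    · intro g hdisj hmeas hC
      rw [integral_iUnion hmeas hdisj hMi.integrableOn]
      simp [hC]
  have hSzero : ∀ S : Set (X × X), MeasurableSet S → (μ.prod μ) S < ∞ →
      ∫ p in S, (K p - (starRingEnd ℂ) (K (p.2, p.1))) ∂(μ.prod μ) = 0 := by
    intro S hS hSf
    have hmono : Monotone (fun n => S ∩ (spanningSets μ n ×ˢ spanningSets μ n)) := fun m n hmn =>
      Set.inter_subset_inter_right _
        (Set.prod_mono (monotone_spanningSets μ hmn) (monotone_spanningSets μ hmn))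
    have hunion : (⋃ n, S ∩ (spanningSets μ n ×ˢ spanningSets μ n)) = S := by
      rw [← Set.inter_iUnion]
      have huniv : (⋃ n, spanningSets μ n ×ˢ spanningSets μ n) = Set.univ := by
        apply Set.eq_univ_of_forall
        intro p
        have h1 : p.1 ∈ ⋃ n, spanningSets μ n := by rw [iUnion_spanningSets]; trivial
        have h2 : p.2 ∈ ⋃ n, spanningSets μ n := by rw [iUnion_spanningSets]; trivial
        obtain ⟨i, hi⟩ := Set.mem_iUnion.mp h1
        obtain ⟨j, hj⟩ := Set.mem_iUnion.mp h2
        exact Set.mem_iUnion.mpr ⟨max i j, ⟨monotone_spanningSets μ (le_max_left i j) hi,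
          monotone_spanningSets μ (le_max_right i j) hj⟩⟩
      rw [huniv, Set.inter_univ]
    have hint : IntegrableOn (fun p : X × X => K p - (starRingEnd ℂ) (K (p.2, p.1))) S (μ.prod μ) :=
      hMint S hS hSf
    have htend := tendsto_setIntegral_of_monotone
      (f := fun p : X × X => K p - (starRingEnd ℂ) (K (p.2, p.1)))
      (fun n => hS.inter ((measurableSet_spanningSets μ n).prod (measurableSet_spanningSets μ n)))
      hmono (by rwa [hunion])
    rw [hunion] at htend
    have hzero : (fun n => ∫ p in S ∩ (spanningSets μ n ×ˢ spanningSets μ n),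
        (K p - (starRingEnd ℂ) (K (p.2, p.1))) ∂(μ.prod μ)) = fun _ => (0 : ℂ) := by
      funext n
      rw [← Measure.restrict_restrict hS]
      exact hclaim n S hS
    rw [hzero] at htend
    exact (tendsto_nhds_unique htend tendsto_const_nhds)
  have hM0 : (fun p : X × X => K p - (starRingEnd ℂ) (K (p.2, p.1))) =ᵐ[μ.prod μ] 0 :=
    ae_eq_zero_of_forall_setIntegral_eq_of_sigmaFinite hMint hSzero
  filter_upwards [hM0] with p hp
  simpa [sub_eq_zero] using hp
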